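/- Let w ≥ 4 and let 2 ≤ r ≤ w−2. The number of triples (a, b, c) of w-bit words such that (a ⋘ r) ⊞ (b ⋘ r) ⊞ (c ⋘ r) = (a ⊞ b ⊞ c) ⋘ r equals C(2^r + 2, 2^r − 1) · C(2^(w−r) + 2, 2^(w−r) − 1), where C denotes the binomial coefficient. Equivalently, for independent uniformly distributed a, b, c, the probability of the equality is C(2^r + 2, 2^r − 1) · C(2^(w−r) + 2, 2^(w−r) − 1) / 2^(3w). -/

import Mathlib

private lemma lt_nm {a b n m : ℕ} (ha : a < n) (hb : b < m) : a * m + b < n * m := by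
  calc a * m + b < (a + 1) * m := by nlinarith
  _ ≤ n * m := Nat.mul_le_mul_right m ha

private lemma euclid_eq_iff {n a b h h' : ℕ} (hn : 0 < n) (hh : h < n) (hh' : h' < n) :
    a * n + h = b * n + h' ↔ a = b ∧ h = h' := by
  constructor
  · intro e
    have h1 : (a * n + h) % n = (b * n + h') % n := by rw [e]
    rw [Nat.mul_add_mod', Nat.mul_add_mod', Nat.mod_eq_of_lt hh, Nat.mod_eq_of_lt hh'] at h1
    have h2 : a * n = b * n := by omega
    exact ⟨Nat.eq_of_mul_eq_mul_right hn h2, h1⟩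
  · rintro ⟨rfl, rfl⟩; rfl

private lemma core (n m L H : ℕ) (hn : 3 ≤ n) (hm : 3 ≤ m)
    (hL : L < 3 * m) (hH : H < 3 * n) :
    (L * n + H) % (n * m) = (H * m + L) % (n * m) % m * n + (H * m + L) % (n * m) / m ↔
      H < n ∧ L < m := by
  have hn0 : 0 < n := by omega
  have hm0 : 0 < m := by omega
  set α := L / m with hα'
  set L' := L % m with hL''
  set β := H / n with hβ'
  set H' := H % n with hH''
  have hLd : L = α * m + L' := (Nat.div_add_mod L m).symm.trans (by ring)
  have hHd : H = β * n + H' := (Nat.div_add_mod H n).symm.trans (by ring)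
  have hL'm : L' < m := Nat.mod_lt _ hm0
  have hH'n : H' < n := Nat.mod_lt _ hn0
  have hα2 : α < 3 := (Nat.div_lt_iff_lt_mul hm0).2 hL
  have hβ2 : β < 3 := (Nat.div_lt_iff_lt_mul hn0).2 hH
  -- RHS simplification
  have eS : (H * m + L) % (n * m) = (H + α) % n * m + L' := by
    have h1 : H * m + L = (H + α) * m + L' := by rw [hLd]; ring
    have h2 : (H + α) % n * m + L' < n * m := lt_nm (Nat.mod_lt _ hn0) hL'm
    rw [h1, Nat.add_mod, Nat.mul_mod_mul_right,
      Nat.mod_eq_of_lt (lt_of_lt_of_le hL'm (Nat.le_mul_of_pos_left m hn0)),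
      Nat.mod_eq_of_lt h2]
  rw [eS, Nat.mul_add_mod', Nat.mod_eq_of_lt hL'm,
    show (H + α) % n * m + L' = m * ((H + α) % n) + L' by ring,
    Nat.mul_add_div hm0, Nat.div_eq_of_lt hL'm, Nat.add_zero]
  -- LHS simplification
  have eL : (L * n + H) % (n * m) = ((L' + β) * n + H') % (n * m) := by
    have h1 : L * n + H = (L' + β) * n + H' + α * (n * m) := by rw [hLd, hHd]; ring
    rw [h1, Nat.add_mul_mod_self_right]
  rw [eL]
  by_cases hc : L' + β < m
  · rw [Nat.mod_eq_of_lt (by rw [Nat.mul_comm n m]; exact lt_nm hc hH'n),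
      euclid_eq_iff hn0 hH'n (Nat.mod_lt _ hn0)]
    constructor
    · rintro ⟨e1, e2⟩
      have hβ0 : β = 0 := by omega
      rw [hβ0] at hHd; simp at hHd
      rcases Nat.lt_or_ge (H + α) n with h | h
      · rw [Nat.mod_eq_of_lt h] at e2
        have hα0 : α = 0 := by omega
        rw [hα0] at hLd; simp at hLd
        omega
      · rw [Nat.mod_eq_sub_mod h, Nat.mod_eq_of_lt (by omega)] at e2
        omega
    · rintro ⟨h1, h2⟩
      have hβ0 : β = 0 := hβ' ▸ Nat.div_eq_of_lt h1
      have hα0 : α = 0 := hα' ▸ Nat.div_eq_of_lt h2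
      rw [hβ0] at hHd; simp at hHd
      rw [hα0] at hLd; simp at hLd
      rw [hα0, Nat.add_zero, Nat.mod_eq_of_lt h1]
      omega
  · have hβ1 : 1 ≤ β := by omega
    have hHn : n ≤ H := by
      calc n = 1 * n := (Nat.one_mul n).symm
      _ ≤ β * n := Nat.mul_le_mul_right n hβ1
      _ ≤ H := by omega
    have key : (L' + β) * n + H' = (L' + β - m) * n + H' + n * m := by
      obtain ⟨γ, hγ⟩ : ∃ γ, L' + β = m + γ := ⟨L' + β - m, by omega⟩
      rw [hγ, show m + γ - m = γ by omega]; ring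
    rw [key, Nat.add_mod_right,
      Nat.mod_eq_of_lt (by rw [Nat.mul_comm n m]; exact lt_nm (by omega) hH'n),
      euclid_eq_iff hn0 hH'n (Nat.mod_lt _ hn0)]
    constructor
    · rintro ⟨e1, -⟩; omega
    · rintro ⟨h1, -⟩; omega

private lemma toNat_rot {w r : ℕ} (hr : r < w) (x : BitVec w) :
    (x.rotateLeft r).toNat = x.toNat % 2 ^ (w - r) * 2 ^ r + x.toNat / 2 ^ (w - r) := by
  rw [BitVec.rotateLeft_eq_rotateLeftAux_of_lt hr]
  have h2w : (2 : ℕ) ^ w = 2 ^ (w - r) * 2 ^ r := by rw [← pow_add]; congr 1; omega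
  have hd : x.toNat / 2 ^ (w - r) < 2 ^ r := by
    rw [Nat.div_lt_iff_lt_mul (Nat.pow_pos (by norm_num))]
    calc x.toNat < 2 ^ w := x.isLt
    _ = 2 ^ r * 2 ^ (w - r) := by rw [← pow_add]; congr 1; omega
  show (x <<< r ||| x >>> (w - r)).toNat = _
  rw [BitVec.toNat_or, BitVec.toNat_shiftLeft, BitVec.toNat_ushiftRight,
    Nat.shiftLeft_eq, Nat.shiftRight_eq_div_pow, h2w, Nat.mul_mod_mul_right,
    show x.toNat % 2 ^ (w - r) * 2 ^ r = 2 ^ r * (x.toNat % 2 ^ (w - r)) by ring,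
    ← Nat.two_pow_add_eq_or_of_lt hd,
    show (2:ℕ) ^ r * (x.toNat % 2 ^ (w - r)) = x.toNat % 2 ^ (w - r) * 2 ^ r by ring]

private lemma cond_iff {w r : ℕ} (hrw : r < w) (h3n : 3 ≤ 2 ^ r) (h3m : 3 ≤ 2 ^ (w - r))
    (a b c : BitVec w) :
    a.rotateLeft r + b.rotateLeft r + c.rotateLeft r = (a + b + c).rotateLeft r ↔
      a.toNat / 2 ^ (w - r) + b.toNat / 2 ^ (w - r) + c.toNat / 2 ^ (w - r) < 2 ^ r ∧
      a.toNat % 2 ^ (w - r) + b.toNat % 2 ^ (w - r) + c.toNat % 2 ^ (w - r) < 2 ^ (w - r) := by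
  have h2w : (2 : ℕ) ^ w = 2 ^ r * 2 ^ (w - r) := by rw [← pow_add]; congr 1; omega
  have hm0 : 0 < 2 ^ (w - r) := Nat.pow_pos (by norm_num)
  set n := 2 ^ r with hn
  set m := 2 ^ (w - r) with hm
  set L := a.toNat % m + b.toNat % m + c.toNat % m with hL
  set H := a.toNat / m + b.toNat / m + c.toNat / m with hH
  rw [BitVec.toNat_eq, BitVec.toNat_add, BitVec.toNat_add, toNat_rot hrw,
    toNat_rot hrw, toNat_rot hrw, toNat_rot hrw, BitVec.toNat_add, BitVec.toNat_add,
    Nat.mod_add_mod, Nat.mod_add_mod]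
  have e1 : a.toNat % m * n + a.toNat / m + (b.toNat % m * n + b.toNat / m) +
      (c.toNat % m * n + c.toNat / m) = L * n + H := by rw [hL, hH]; ring
  have e2 : a.toNat + b.toNat + c.toNat = H * m + L := by
    conv_lhs => rw [← Nat.div_add_mod a.toNat m, ← Nat.div_add_mod b.toNat m,
      ← Nat.div_add_mod c.toNat m]
    rw [hL, hH]; ring
  rw [e1, e2, h2w]
  have hdiv : ∀ x : BitVec w, x.toNat / m < n := by
    intro x
    rw [Nat.div_lt_iff_lt_mul hm0, ← h2w]
    exact x.isLt
  exact core n m L H h3n h3m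
    (by have := Nat.mod_lt a.toNat hm0; have := Nat.mod_lt b.toNat hm0;
        have := Nat.mod_lt c.toNat hm0; omega)
    (by have := hdiv a; have := hdiv b; have := hdiv c; omega)

open Finset

private lemma pairsEq (N s : ℕ) (hs : s < N) :
    ((range N ×ˢ range N).filter (fun p => p.1 + p.2 = s)).card = s + 1 := by
  have himg : ((range N ×ˢ range N).filter (fun p => p.1 + p.2 = s)) =
      (range (s + 1)).image (fun x => (x, s - x)) := by
    ext ⟨a, b⟩
    simp only [mem_filter, mem_product, mem_range, mem_image, Prod.mk.injEq]
    constructor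
    · rintro ⟨⟨ha, hb⟩, hab⟩; exact ⟨a, by omega, rfl, by omega⟩
    · rintro ⟨x, hx, rfl, rfl⟩; omega
  rw [himg, Finset.card_image_of_injective _ (fun x y h => congrArg Prod.fst h), card_range]

private lemma pairsLT (N n : ℕ) (h : n ≤ N) :
    ((range N ×ˢ range N).filter (fun p => p.1 + p.2 < n)).card = (n + 1).choose 2 := by
  induction n with
  | zero => simp
  | succ k ih =>
    have hsplit : ((range N ×ˢ range N).filter (fun p => p.1 + p.2 < k + 1)) =
        ((range N ×ˢ range N).filter (fun p => p.1 + p.2 < k)) ∪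
        ((range N ×ˢ range N).filter (fun p => p.1 + p.2 = k)) := by
      rw [← filter_or]
      exact filter_congr (fun x _ => by omega)
    rw [hsplit, card_union_of_disjoint (disjoint_filter.mpr (fun x _ h1 h2 => by omega)),
      ih (by omega), pairsEq N k (by omega)]
    rw [show k + 2 = (k + 1) + 1 from rfl, Nat.choose_succ_succ (k + 1) 1,
      Nat.choose_one_right]
    show (k + 1).choose 2 + (k + 1) = k + 1 + (k + 1).choose 2
    omega

private lemma triplesEq (N s : ℕ) (hs : s < N) :
    ((range N ×ˢ range N ×ˢ range N).filter (fun p => p.1 + p.2.1 + p.2.2 = s)).card =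
      (s + 2).choose 2 := by
  have himg : ((range N ×ˢ range N ×ˢ range N).filter (fun p => p.1 + p.2.1 + p.2.2 = s)) =
      (((range N ×ˢ range N).filter (fun p => p.1 + p.2 < s + 1)).image
        (fun q => (q.1, q.2, s - q.1 - q.2))) := by
    ext ⟨a, b, c⟩
    simp only [mem_filter, mem_product, mem_range, mem_image, Prod.mk.injEq]
    constructor
    · rintro ⟨⟨ha, hb, hc⟩, habc⟩
      exact ⟨(a, b), ⟨⟨ha, hb⟩, by omega⟩, rfl, rfl, by omega⟩
    · rintro ⟨⟨x, y⟩, ⟨⟨hx, hy⟩, hxy⟩, rfl, rfl, rfl⟩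
      exact ⟨⟨hx, hy, by omega⟩, by omega⟩
  have hinj : Function.Injective (fun q : ℕ × ℕ => (q.1, q.2, s - q.1 - q.2)) := by
    rintro ⟨x, y⟩ ⟨x', y'⟩ h
    simp only [Prod.mk.injEq] at h
    exact Prod.ext h.1 h.2.1
  rw [himg, Finset.card_image_of_injective _ hinj, pairsLT N (s + 1) (by omega)]

private lemma triplesLT (N n : ℕ) (h : n ≤ N) :
    ((range N ×ˢ range N ×ˢ range N).filter (fun p => p.1 + p.2.1 + p.2.2 < n)).card =
      (n + 2).choose 3 := by
  induction n with
  | zero => simp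
  | succ k ih =>
    have hsplit : ((range N ×ˢ range N ×ˢ range N).filter (fun p => p.1 + p.2.1 + p.2.2 < k + 1)) =
        ((range N ×ˢ range N ×ˢ range N).filter (fun p => p.1 + p.2.1 + p.2.2 < k)) ∪
        ((range N ×ˢ range N ×ˢ range N).filter (fun p => p.1 + p.2.1 + p.2.2 = k)) := by
      rw [← filter_or]
      exact filter_congr (fun x _ => by omega)
    rw [hsplit, card_union_of_disjoint (disjoint_filter.mpr (fun x _ h1 h2 => by omega)),
      ih (by omega), triplesEq N k (by omega)]
    rw [show k + 3 = (k + 2) + 1 from rfl, Nat.choose_succ_succ (k + 2) 2]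
    show (k + 2).choose 3 + (k + 2).choose 2 = (k + 2).choose 2 + (k + 2).choose 3
    omega

open Finset in
private lemma ofNat_split {w r : ℕ} (hrw : r < w) {x y : ℕ} (hx : x < 2 ^ r)
    (hy : y < 2 ^ (w - r)) :
    (BitVec.ofNat w (x * 2 ^ (w - r) + y)).toNat = x * 2 ^ (w - r) + y := by
  rw [BitVec.toNat_ofNat, Nat.mod_eq_of_lt]
  calc x * 2 ^ (w - r) + y < 2 ^ r * 2 ^ (w - r) := lt_nm hx hy
  _ = 2 ^ w := by rw [← pow_add]; congr 1; omega

instance bitvecFintype {w : ℕ} : Fintype (BitVec w) :=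
  Fintype.ofEquiv (Fin (2 ^ w)) ⟨BitVec.ofFin, BitVec.toFin, fun _ => rfl, fun _ => rfl⟩

open Finset in
private lemma key_card {w r : ℕ} (hw : 4 ≤ w) (hr : 2 ≤ r) (hrw : r ≤ w - 2) :
    (Finset.univ.filter (fun p : BitVec w × BitVec w × BitVec w =>
        p.1.rotateLeft r + p.2.1.rotateLeft r + p.2.2.rotateLeft r =
          (p.1 + p.2.1 + p.2.2).rotateLeft r)).card =
      (2 ^ r + 2).choose 3 * (2 ^ (w - r) + 2).choose 3 := by
  have hrw' : r < w := by omega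
  have hn4 : 4 ≤ 2 ^ r := by
    calc (4 : ℕ) = 2 ^ 2 := by norm_num
    _ ≤ 2 ^ r := Nat.pow_le_pow_right (by norm_num) hr
  have hm4 : 4 ≤ 2 ^ (w - r) := by
    calc (4 : ℕ) = 2 ^ 2 := by norm_num
    _ ≤ 2 ^ (w - r) := Nat.pow_le_pow_right (by norm_num) (by omega)
  have hm0 : 0 < 2 ^ (w - r) := by omega
  have hdiv : ∀ x : BitVec w, x.toNat / 2 ^ (w - r) < 2 ^ r := by
    intro x
    rw [Nat.div_lt_iff_lt_mul hm0]
    calc x.toNat < 2 ^ w := x.isLt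
    _ = 2 ^ r * 2 ^ (w - r) := by rw [← pow_add]; congr 1; omega
  have hmod : ∀ x : BitVec w, x.toNat % 2 ^ (w - r) < 2 ^ (w - r) := fun x => Nat.mod_lt _ hm0
  have hsplitdiv : ∀ x y : ℕ, y < 2 ^ (w - r) → (x * 2 ^ (w - r) + y) / 2 ^ (w - r) = x := by
    intro x y hy
    rw [show x * 2 ^ (w - r) + y = 2 ^ (w - r) * x + y by ring, Nat.mul_add_div hm0,
      Nat.div_eq_of_lt hy, Nat.add_zero]
  have hsplitmod : ∀ x y : ℕ, y < 2 ^ (w - r) → (x * 2 ^ (w - r) + y) % 2 ^ (w - r) = y := by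
    intro x y hy
    rw [show x * 2 ^ (w - r) + y = 2 ^ (w - r) * x + y by ring, Nat.mul_add_mod,
      Nat.mod_eq_of_lt hy]
  have hcard : (Finset.univ.filter (fun p : BitVec w × BitVec w × BitVec w =>
      p.1.rotateLeft r + p.2.1.rotateLeft r + p.2.2.rotateLeft r =
        (p.1 + p.2.1 + p.2.2).rotateLeft r)).card =
      (((range (2 ^ r) ×ˢ range (2 ^ r) ×ˢ range (2 ^ r)).filter
          (fun p => p.1 + p.2.1 + p.2.2 < 2 ^ r)) ×ˢ
        ((range (2 ^ (w - r)) ×ˢ range (2 ^ (w - r)) ×ˢ range (2 ^ (w - r))).filter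
          (fun p => p.1 + p.2.1 + p.2.2 < 2 ^ (w - r)))).card := by
    apply Finset.card_nbij'
      (i := fun p => ((p.1.toNat / 2 ^ (w - r), p.2.1.toNat / 2 ^ (w - r),
          p.2.2.toNat / 2 ^ (w - r)),
        (p.1.toNat % 2 ^ (w - r), p.2.1.toNat % 2 ^ (w - r), p.2.2.toNat % 2 ^ (w - r))))
      (j := fun q => (BitVec.ofNat w (q.1.1 * 2 ^ (w - r) + q.2.1),
        BitVec.ofNat w (q.1.2.1 * 2 ^ (w - r) + q.2.2.1),
        BitVec.ofNat w (q.1.2.2 * 2 ^ (w - r) + q.2.2.2)))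
    · rintro ⟨a, b, c⟩ hp
      rw [mem_coe, mem_filter] at hp
      have hc := (cond_iff hrw' (by omega) (by omega) a b c).1 hp.2
      simp only [mem_coe, mem_product, mem_filter, mem_range]
      exact ⟨⟨⟨hdiv a, hdiv b, hdiv c⟩, hc.1⟩, ⟨⟨hmod a, hmod b, hmod c⟩, hc.2⟩⟩
    · rintro ⟨⟨x1, x2, x3⟩, ⟨y1, y2, y3⟩⟩ hq
      simp only [mem_coe, mem_product, mem_filter, mem_range] at hq
      obtain ⟨⟨⟨hx1, hx2, hx3⟩, hxs⟩, ⟨⟨hy1, hy2, hy3⟩, hys⟩⟩ := hq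
      rw [mem_coe, mem_filter]
      refine ⟨mem_univ _, ?_⟩
      apply (cond_iff hrw' (by omega) (by omega) _ _ _).2
      rw [ofNat_split hrw' hx1 hy1, ofNat_split hrw' hx2 hy2, ofNat_split hrw' hx3 hy3,
        hsplitdiv x1 y1 hy1, hsplitdiv x2 y2 hy2, hsplitdiv x3 y3 hy3,
        hsplitmod x1 y1 hy1, hsplitmod x2 y2 hy2, hsplitmod x3 y3 hy3]
      exact ⟨hxs, hys⟩
    · rintro ⟨a, b, c⟩ -
      simp only [Prod.mk.injEq]
      refine ⟨?_, ?_, ?_⟩ <;>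
      · apply BitVec.eq_of_toNat_eq
        rw [BitVec.toNat_ofNat, Nat.div_add_mod', Nat.mod_eq_of_lt (BitVec.isLt _)]
    · rintro ⟨⟨x1, x2, x3⟩, ⟨y1, y2, y3⟩⟩ hq
      simp only [mem_coe, mem_product, mem_filter, mem_range] at hq
      obtain ⟨⟨⟨hx1, hx2, hx3⟩, hxs⟩, ⟨⟨hy1, hy2, hy3⟩, hys⟩⟩ := hq
      simp only [Prod.mk.injEq]
      rw [ofNat_split hrw' hx1 hy1, ofNat_split hrw' hx2 hy2, ofNat_split hrw' hx3 hy3,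
        hsplitdiv x1 y1 hy1, hsplitdiv x2 y2 hy2, hsplitdiv x3 y3 hy3,
        hsplitmod x1 y1 hy1, hsplitmod x2 y2 hy2, hsplitmod x3 y3 hy3]
      tauto
  rw [hcard, Finset.card_product, triplesLT _ _ (le_refl _), triplesLT _ _ (le_refl _)]

theorem rotational_probability_three_addends_middle_r
    (w : ℕ) (hw : 4 ≤ w) (r : ℕ) (hr : 2 ≤ r) (hrw : r ≤ w - 2) :
    (Finset.univ.filter (fun p : BitVec w × BitVec w × BitVec w =>
        p.1.rotateLeft r + p.2.1.rotateLeft r + p.2.2.rotateLeft r =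
          (p.1 + p.2.1 + p.2.2).rotateLeft r)).card =
      Nat.choose (2 ^ r + 2) (2 ^ r - 1) *
        Nat.choose (2 ^ (w - r) + 2) (2 ^ (w - r) - 1) ∧
    ((Finset.univ.filter (fun p : BitVec w × BitVec w × BitVec w =>
        p.1.rotateLeft r + p.2.1.rotateLeft r + p.2.2.rotateLeft r =
          (p.1 + p.2.1 + p.2.2).rotateLeft r)).card : ℚ) / 2 ^ (3 * w)
      = (Nat.choose (2 ^ r + 2) (2 ^ r - 1) *
          Nat.choose (2 ^ (w - r) + 2) (2 ^ (w - r) - 1) : ℚ) / 2 ^ (3 * w) := by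
  have hcount : (Finset.univ.filter (fun p : BitVec w × BitVec w × BitVec w =>
      p.1.rotateLeft r + p.2.1.rotateLeft r + p.2.2.rotateLeft r =
        (p.1 + p.2.1 + p.2.2).rotateLeft r)).card =
      Nat.choose (2 ^ r + 2) (2 ^ r - 1) *
        Nat.choose (2 ^ (w - r) + 2) (2 ^ (w - r) - 1) := by
    have hp1 : 1 ≤ 2 ^ r := Nat.one_le_two_pow
    have hp2 : 1 ≤ 2 ^ (w - r) := Nat.one_le_two_pow
    rw [key_card hw hr hrw]
    congr 1
    · rw [show 2 ^ r - 1 = 2 ^ r + 2 - 3 by omega, Nat.choose_symm (by omega)]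
    · rw [show 2 ^ (w - r) - 1 = 2 ^ (w - r) + 2 - 3 by omega, Nat.choose_symm (by omega)]
  refine ⟨hcount, ?_⟩
  rw [hcount]
  push_cast
  ring
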